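/- Let n ≥ 1 and let ρ_0, ρ_1, ..., ρ_{n−1} : ℝ → ℝ be measurable weight functions such that z ↦ z^i ρ_j(z) is Lebesgue integrable on ℝ for all 0 ≤ i, j ≤ n−1. Then det(μ_{ij})_{0≤i,j≤n−1} = (1/n!) ∫_{ℝ^n} Δ_n(z) Δ_n^{(ρ)}(z) dz_1 ⋯ dz_n, where μ_{ij} = ∫_ℝ z^i ρ_j(z) dz, Δ_n(z) = det(z_k^{ℓ−1})_{1≤ℓ,k≤n} is the Vandermonde determinant ∏_{1≤j<k≤n}(z_k − z_j), and Δ_n^{(ρ)}(z) = det(ρ_{ℓ−1}(z_k))_{1≤ℓ,k≤n}. -/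

import Mathlib

open MeasureTheory

open Equiv Finset in
lemma sum_sum_perm_eq_card_mul_det {n : ℕ} (M : Matrix (Fin n) (Fin n) ℝ) :
    ∑ σ : Equiv.Perm (Fin n), ∑ τ : Equiv.Perm (Fin n),
      ((Equiv.Perm.sign σ : ℤ) : ℝ) * ((Equiv.Perm.sign τ : ℤ) : ℝ) *
        ∏ k, M (σ k) (τ k)
      = (n.factorial : ℝ) * M.det := by
  rw [Finset.sum_comm]
  have h : ∀ τ : Equiv.Perm (Fin n),
      ∑ σ : Equiv.Perm (Fin n),
        ((Equiv.Perm.sign σ : ℤ) : ℝ) * ((Equiv.Perm.sign τ : ℤ) : ℝ) *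
          ∏ k, M (σ k) (τ k) = M.det := by
    intro τ
    rw [show (∑ σ : Equiv.Perm (Fin n),
        ((Equiv.Perm.sign σ : ℤ) : ℝ) * ((Equiv.Perm.sign τ : ℤ) : ℝ) *
          ∏ k, M (σ k) (τ k))
        = ∑ π : Equiv.Perm (Fin n),
        ((Equiv.Perm.sign (π * τ) : ℤ) : ℝ) * ((Equiv.Perm.sign τ : ℤ) : ℝ) *
          ∏ k, M ((π * τ) k) (τ k) from
      (Fintype.sum_equiv (Equiv.mulRight τ) _ _ (fun π => rfl)).symm]
    rw [Matrix.det_apply']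
    refine Finset.sum_congr rfl (fun π _ => ?_)
    have h1 : ∏ k, M ((π * τ) k) (τ k) = ∏ k, M (π k) k := by
      rw [← Equiv.prod_comp τ (fun k => M (π k) k)]
      simp [Equiv.Perm.mul_apply]
    have h2 : ((Equiv.Perm.sign (π * τ) : ℤ) : ℝ) * ((Equiv.Perm.sign τ : ℤ) : ℝ)
        = ((Equiv.Perm.sign π : ℤ) : ℝ) := by
      rw [Equiv.Perm.sign_mul]
      push_cast
      rcases Int.units_eq_one_or (Equiv.Perm.sign τ) with h | h <;> simp [h]
    rw [h1, h2]
  rw [Finset.sum_congr rfl (fun τ _ => h τ), Finset.sum_const, Finset.card_univ,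
    Fintype.card_perm, nsmul_eq_mul, Fintype.card_fin]

/-- Andréief-type identity: for measurable weights `ρ 0, ..., ρ (n-1)`
on `ℝ` with integrable moments, the moment determinant `det (μ i j)`, where
`μ i j = ∫ z^i ρ j z dz`, equals `(1/n!) ∫_{ℝ^n} Δₙ(z) Δₙ^{(ρ)}(z) dz`, with
`Δₙ(z) = det (z_k^ℓ)` the Vandermonde determinant and
`Δₙ^{(ρ)}(z) = det (ρ ℓ (z_k))`. -/
theorem det_moment_eq_integral_vandermonde
    (n : ℕ) (hn : 1 ≤ n) (ρ : Fin n → ℝ → ℝ)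
    (hmeas : ∀ j, Measurable (ρ j))
    (hint : ∀ i j : Fin n, Integrable (fun z : ℝ => z ^ (i : ℕ) * ρ j z)) :
    Matrix.det (Matrix.of fun i j : Fin n => ∫ z : ℝ, z ^ (i : ℕ) * ρ j z)
      = (1 / n.factorial : ℝ) *
          ∫ z : Fin n → ℝ,
            Matrix.det (Matrix.of fun ℓ k : Fin n => z k ^ (ℓ : ℕ)) *
              Matrix.det (Matrix.of fun ℓ k : Fin n => ρ ℓ (z k)) := by
  classical
  set μM : Matrix (Fin n) (Fin n) ℝ := Matrix.of fun i j : Fin n => ∫ z : ℝ, z ^ (i : ℕ) * ρ j z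
    with hμM
  -- expand the integrand as a double sum over permutations
  have expand : ∀ z : Fin n → ℝ,
      Matrix.det (Matrix.of fun ℓ k : Fin n => z k ^ (ℓ : ℕ)) *
        Matrix.det (Matrix.of fun ℓ k : Fin n => ρ ℓ (z k))
      = ∑ σ : Equiv.Perm (Fin n), ∑ τ : Equiv.Perm (Fin n),
          ((Equiv.Perm.sign σ : ℤ) : ℝ) * ((Equiv.Perm.sign τ : ℤ) : ℝ) *
            ∏ k, (z k ^ ((σ k : Fin n) : ℕ) * ρ (τ k) (z k)) := by
    intro z
    rw [Matrix.det_apply', Matrix.det_apply', Finset.sum_mul_sum]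
    refine Finset.sum_congr rfl (fun σ _ => Finset.sum_congr rfl (fun τ _ => ?_))
    rw [mul_mul_mul_comm, ← Finset.prod_mul_distrib]
    simp only [Matrix.of_apply]
  have key : (∫ z : Fin n → ℝ,
      Matrix.det (Matrix.of fun ℓ k : Fin n => z k ^ (ℓ : ℕ)) *
        Matrix.det (Matrix.of fun ℓ k : Fin n => ρ ℓ (z k)))
      = ∑ σ : Equiv.Perm (Fin n), ∑ τ : Equiv.Perm (Fin n),
          ((Equiv.Perm.sign σ : ℤ) : ℝ) * ((Equiv.Perm.sign τ : ℤ) : ℝ) *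
            ∏ k, μM (σ k) (τ k) := by
    simp_rw [expand]
    rw [integral_finset_sum]
    · refine Finset.sum_congr rfl (fun σ _ => ?_)
      rw [integral_finset_sum]
      · refine Finset.sum_congr rfl (fun τ _ => ?_)
        rw [integral_const_mul,
          integral_fintype_prod_volume_eq_prod (ι := Fin n)
            (fun k (x : ℝ) => x ^ ((σ k : Fin n) : ℕ) * ρ (τ k) x)]
        rfl
      · intro τ _
        exact (Integrable.fintype_prod
          (f := fun k (x : ℝ) => x ^ ((σ k : Fin n) : ℕ) * ρ (τ k) x)
          (fun k => hint (σ k) (τ k))).const_mul _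
    · intro σ _
      refine integrable_finset_sum _ (fun τ _ => ?_)
      exact (Integrable.fintype_prod
        (f := fun k (x : ℝ) => x ^ ((σ k : Fin n) : ℕ) * ρ (τ k) x)
        (fun k => hint (σ k) (τ k))).const_mul _
  rw [key, sum_sum_perm_eq_card_mul_det]
  have : (n.factorial : ℝ) ≠ 0 := Nat.cast_ne_zero.mpr (Nat.factorial_ne_zero n)
  field_simp
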